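/- Let N be the Newton map of a nonconstant entire function f and U the immediate basin of a root ξ of f. If y₀ ∈ ∂U ∩ ℂ is a fixed point of N, then a contradiction ensues; i.e., N has no fixed points on the finite boundary of U. Equivalently: every fixed point of N in ℂ lies in the interior of its own basin of attraction and not on the boundary of any immediate basin. -/

import Mathlib

open Filter Set Topology

lemma newton_attracts (f : ℂ → ℂ) (hf : Differentiable ℂ f)
    (hnc : ¬ ∃ c : ℂ, ∀ z, f z = c)
    (N : ℂ → ℂ) (hN : N = fun z => z - f z / deriv f z)
    (y : ℂ) (hy : f y = 0) :
    ∃ r > 0, ∀ z ∈ Metric.ball y r, Tendsto (fun n => N^[n] z) atTop (nhds y) := by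
  have hA : ∀ z, AnalyticAt ℂ f z := fun z => hf.analyticAt z
  have hAO : AnalyticOnNhd ℂ f univ := fun z _ => hA z
  have horder : analyticOrderAt f y ≠ ⊤ := by
    intro h
    rw [analyticOrderAt_eq_top] at h
    have : EqOn f 0 (univ : Set ℂ) :=
      hAO.eqOn_zero_of_preconnected_of_eventuallyEq_zero isPreconnected_univ (mem_univ y) h
    exact hnc ⟨0, fun z => this (mem_univ z)⟩
  obtain ⟨m, hm⟩ := WithTop.ne_top_iff_exists.mp horder
  obtain ⟨g, hg, hgy, hfg⟩ := ((hA y).analyticOrderAt_eq_natCast (n := m)).mp hm.symm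
  have hm1 : m ≠ 0 := by
    intro h
    rw [h] at hfg
    have := hfg.self_of_nhds
    simp [hy] at this
    exact hgy this.symm
  obtain ⟨k, rfl⟩ := Nat.exists_eq_succ_of_ne_zero hm1
  simp only [smul_eq_mul] at hfg
  -- an open set where f = (·-y)^(k+1) * g and g is analytic
  have hgev : ∀ᶠ w in 𝓝 y, AnalyticAt ℂ g w := hg.eventually_analyticAt
  obtain ⟨V, hV, hVo, hyV⟩ := eventually_nhds_iff.mp (hfg.and hgev)
  -- derivative of f on V
  have hderiv : ∀ w ∈ V, deriv f w
      = ((k : ℂ) + 1) * (w - y) ^ k * g w + (w - y) ^ (k + 1) * deriv g w := by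
    intro w hw
    have heq : f =ᶠ[𝓝 w] fun u => (u - y) ^ (k + 1) * g u :=
      eventually_of_mem (hVo.mem_nhds hw) fun u hu => (hV u hu).1
    rw [heq.deriv_eq]
    have h1 : HasDerivAt (fun u : ℂ => (u - y) ^ (k + 1))
        (((k : ℂ) + 1) * (w - y) ^ k) w := by
      have := ((hasDerivAt_id w).sub_const y).fun_pow (k + 1)
      simpa using this
    have h2 : HasDerivAt g (deriv g w) w := ((hV w hw).2.differentiableAt).hasDerivAt
    rw [(h1.fun_mul h2).deriv]
  -- denominator D
  set D : ℂ → ℂ := fun w => ((k : ℂ) + 1) * g w + (w - y) * deriv g w with hD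
  have hDy : D y ≠ 0 := by
    simp only [hD, sub_self, zero_mul, add_zero]
    exact mul_ne_zero (Nat.cast_add_one_ne_zero k) hgy
  have hdg_cont : ContinuousAt (deriv g) y := by
    obtain ⟨t, ht, hto, hyt⟩ := eventually_nhds_iff.mp hgev
    have : AnalyticOnNhd ℂ g t := fun w hw => ht w hw
    exact ((this.deriv) y hyt).continuousAt
  have hDcont : ContinuousAt D y := by
    exact ((continuousAt_const.mul hg.continuousAt).add
      (((continuousAt_id.sub continuousAt_const)).mul hdg_cont))
  have hDev : ∀ᶠ w in 𝓝 y, D w ≠ 0 := hDcont.eventually_ne hDy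
  -- the factor q
  set q : ℂ → ℂ := fun w => ((k : ℂ) * g w + (w - y) * deriv g w) / D w with hq
  have hqy : q y = (k : ℂ) / ((k : ℂ) + 1) := by
    simp only [hq, hD, sub_self, zero_mul, add_zero]
    rw [div_eq_div_iff (mul_ne_zero (Nat.cast_add_one_ne_zero k) hgy) (Nat.cast_add_one_ne_zero k)]
    ring
  have hqnorm : ‖q y‖ < 1 := by
    rw [hqy]
    rw [norm_div]
    simp only [Complex.norm_natCast]
    have h1 : ‖(k : ℂ) + 1‖ = (k : ℝ) + 1 := by
      have : ((k : ℂ) + 1) = ((k + 1 : ℕ) : ℂ) := by push_cast; ring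
      rw [this, Complex.norm_natCast]; push_cast; ring
    rw [h1, div_lt_one (by positivity)]
    linarith
  -- contraction constant
  set c : ℝ := (‖q y‖ + 1) / 2 with hc
  have hc1 : c < 1 := by rw [hc]; linarith
  have hc0 : 0 < c := by rw [hc]; have := norm_nonneg (q y); linarith
  have hqcont : ContinuousAt q y :=
    ((continuousAt_const.mul hg.continuousAt).add
      ((continuousAt_id.sub continuousAt_const).mul hdg_cont)).div hDcont hDy
  have hqev : ∀ᶠ w in 𝓝 y, ‖q w‖ ≤ c := by
    have : Tendsto (fun w => ‖q w‖) (𝓝 y) (𝓝 ‖q y‖) := hqcont.norm.tendsto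
    filter_upwards [this.eventually_lt_const (show ‖q y‖ < c by rw [hc]; linarith)] with w hw
    exact hw.le
  -- the key identity eventually
  have hkey : ∀ᶠ w in 𝓝 y, N w - y = (w - y) * q w ∧ ‖q w‖ ≤ c := by
    filter_upwards [eventually_nhds_iff.mpr ⟨V, hV, hVo, hyV⟩, hDev, hqev,
      eventually_nhds_iff.mpr ⟨V, fun w hw => hderiv w hw, hVo, hyV⟩] with w hw hDw hqw hdw
    refine ⟨?_, hqw⟩
    have hfw : f w = (w - y) ^ (k + 1) * g w := hw.1
    have hfd : deriv f w = (w - y) ^ k * D w := by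
      rw [hdw, hD]; ring
    rw [hN]
    simp only
    rcases eq_or_ne w y with rfl | hwy
    · simp [hy]
    · have hwk : (w - y) ^ k ≠ 0 := pow_ne_zero k (sub_ne_zero.mpr hwy)
      have hdiv : f w / deriv f w = (w - y) * g w / D w := by
        rw [hfw, hfd, pow_succ]
        rw [show (w - y) ^ k * (w - y) * g w = (w - y) ^ k * ((w - y) * g w) by ring,
          mul_div_mul_left _ _ hwk]
      rw [hdiv, hq]
      field_simp [hD]
      ring
  obtain ⟨r, hr0, hball⟩ := Metric.eventually_nhds_iff_ball.mp hkey
  refine ⟨r, hr0, fun z hz => ?_⟩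
  -- induction: iterates stay in ball and contract
  have hiter : ∀ n, N^[n] z ∈ Metric.ball y r ∧ ‖N^[n] z - y‖ ≤ c ^ n * ‖z - y‖ := by
    intro n
    induction n with
    | zero => simpa using hz
    | succ n ih =>
      obtain ⟨hmem, hbound⟩ := ih
      have hw := hball _ hmem
      have hstep : ‖N (N^[n] z) - y‖ ≤ c * ‖N^[n] z - y‖ := by
        rw [hw.1, norm_mul]
        exact mul_le_mul_of_nonneg_left hw.2 (norm_nonneg _) |>.trans_eq (mul_comm _ _)
      rw [Function.iterate_succ_apply']
      constructor
      · rw [Metric.mem_ball, dist_eq_norm]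
        calc ‖N (N^[n] z) - y‖ ≤ c * ‖N^[n] z - y‖ := hstep
          _ ≤ 1 * ‖N^[n] z - y‖ := mul_le_mul_of_nonneg_right hc1.le (norm_nonneg _)
          _ = ‖N^[n] z - y‖ := one_mul _
          _ < r := by rw [← dist_eq_norm]; exact hmem
      · calc ‖N (N^[n] z) - y‖ ≤ c * ‖N^[n] z - y‖ := hstep
          _ ≤ c * (c ^ n * ‖z - y‖) := mul_le_mul_of_nonneg_left hbound hc0.le
          _ = c ^ (n + 1) * ‖z - y‖ := by ring
  rw [tendsto_iff_dist_tendsto_zero]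
  simp only [dist_eq_norm]
  apply squeeze_zero (fun n => norm_nonneg _) (fun n => (hiter n).2)
  have := (tendsto_pow_atTop_nhds_zero_of_lt_one hc0.le hc1).mul_const ‖z - y‖
  simpa using this

/-- The Newton map `N_f = id - f/f'` of a nonconstant entire function has no fixed
points on the finite boundary of the immediate basin `U` of a root `ξ`. Since the
fixed points of `N_f` in `ℂ` are precisely the roots of `f`, we state this as:
no root of `f` lies on `∂U`. -/
theorem no_fixed_point_on_boundary_of_basin
    (f : ℂ → ℂ) (hf : ∀ z, DifferentiableAt ℂ f z)
    (hnc : ¬ ∃ c : ℂ, ∀ z, f z = c)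
    (N : ℂ → ℂ) (hN : N = fun z => z - f z / deriv f z)
    (ξ : ℂ) (hξ : f ξ = 0)
    (U : Set ℂ)
    (hU : U = connectedComponentIn {z | Tendsto (fun n => N^[n] z) atTop (nhds ξ)} ξ) :
    ∀ y : ℂ, f y = 0 → y ∉ frontier U := by
  intro y hy hyf
  have hfd : Differentiable ℂ f := fun z => hf z
  set A : Set ℂ := {z | Tendsto (fun n => N^[n] z) atTop (nhds ξ)} with hA
  have hUA : U ⊆ A := hU ▸ connectedComponentIn_subset A ξ
  rcases eq_or_ne y ξ with rfl | hyξ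
  · -- y = ξ : ξ is in the interior of U
    obtain ⟨r, hr0, hball⟩ := newton_attracts f hfd hnc N hN y hy
    have hsub : Metric.ball y r ⊆ U := by
      rw [hU]
      exact (convex_ball y r).isPreconnected.subset_connectedComponentIn
        (Metric.mem_ball_self hr0) (fun z hz => hball z hz)
    have : y ∈ interior U := mem_interior.mpr ⟨_, hsub, Metric.isOpen_ball, Metric.mem_ball_self hr0⟩
    exact hyf.2 this
  · -- y ≠ ξ : a ball around y is disjoint from A ⊇ U, so y ∉ closure U
    obtain ⟨r, hr0, hball⟩ := newton_attracts f hfd hnc N hN y hy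
    have hdisj : Metric.ball y r ∩ U = ∅ := by
      rw [eq_empty_iff_forall_notMem]
      rintro z ⟨hz1, hz2⟩
      have h1 : Tendsto (fun n => N^[n] z) atTop (nhds y) := hball z hz1
      have h2 : Tendsto (fun n => N^[n] z) atTop (nhds ξ) := hUA hz2
      exact hyξ (tendsto_nhds_unique h1 h2)
    have hcl : y ∈ closure U := hyf.1
    obtain ⟨z, hz1, hz2⟩ := Metric.mem_closure_iff.mp hcl r hr0
    have : z ∈ Metric.ball y r ∩ U := ⟨Metric.mem_ball'.mpr hz2, hz1⟩
    rw [hdisj] at this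
    exact this
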